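/- For finite nonempty sets A, B of non-negative integers, |A + B| = |A| * |B| if and only if the difference sets D_A = {a - a' : a, a' ∈ A, a > a'} and D_B = {b - b' : b, b' ∈ B, b > b'} are disjoint, where A + B = {a + b : a ∈ A, b ∈ B} is the sumset. -/
import Mathlib


open Pointwise

/-- The difference set of a finite set of naturals: positive differences of pairs. -/
def diffSet (A : Finset ℕ) : Finset ℕ :=
  ((A ×ˢ A).filter (fun p => p.2 < p.1)).image (fun p => p.1 - p.2)

lemma mem_diffSet {A : Finset ℕ} {d : ℕ} :
    d ∈ diffSet A ↔ ∃ a₁ ∈ A, ∃ a₂ ∈ A, a₂ < a₁ ∧ a₁ - a₂ = d := by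
  simp [diffSet, Finset.mem_image, Finset.mem_filter]
  constructor
  · rintro ⟨a₁, a₂, ⟨⟨h1, h2⟩, hlt⟩, heq⟩
    exact ⟨a₁, h1, a₂, h2, hlt, heq⟩
  · rintro ⟨a₁, h1, a₂, h2, hlt, heq⟩
    exact ⟨a₁, a₂, ⟨⟨h1, h2⟩, hlt⟩, heq⟩

theorem stmt_0 (A B : Finset ℕ) (hA : A.Nonempty) (hB : B.Nonempty) :
    (A + B).card = A.card * B.card ↔ Disjoint (diffSet A) (diffSet B) := by
  have himg : A + B = (A ×ˢ B).image (fun p => p.1 + p.2) := by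
    ext x
    simp [Finset.mem_add, Finset.mem_image]
    tauto
  rw [himg]
  rw [← Finset.card_product]
  rw [Finset.card_image_iff]
  constructor
  · intro hinj
    rw [Finset.disjoint_left]
    intro d hdA hdB
    obtain ⟨a₁, ha₁, a₂, ha₂, halt, haeq⟩ := mem_diffSet.mp hdA
    obtain ⟨b₁, hb₁, b₂, hb₂, hblt, hbeq⟩ := mem_diffSet.mp hdB
    have : a₁ + b₂ = a₂ + b₁ := by omega
    have := hinj (Finset.mk_mem_product ha₁ hb₂) (Finset.mk_mem_product ha₂ hb₁) this
    simp at this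
    omega
  · intro hdisj
    rintro ⟨a, b⟩ hab ⟨a', b'⟩ hab' h
    simp only [Finset.mem_coe, Finset.mem_product] at hab hab'
    simp only at h
    by_contra hne
    rw [Finset.disjoint_left] at hdisj
    rcases lt_trichotomy a a' with hlt | heq | hgt
    · have hb : b' < b := by omega
      exact hdisj (mem_diffSet.mpr ⟨a', hab'.1, a, hab.1, hlt, rfl⟩)
        (mem_diffSet.mpr ⟨b, hab.2, b', hab'.2, hb, by omega⟩)
    · apply hne; simp [Prod.ext_iff]; omega
    · have hb : b < b' := by omega
      exact hdisj (mem_diffSet.mpr ⟨a, hab.1, a', hab'.1, hgt, rfl⟩)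
        (mem_diffSet.mpr ⟨b', hab'.2, b, hab.2, hb, by omega⟩)
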